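/- Let α > 0 and ε > 0. If 𝒫 and 𝒫' are two partitions of X all of whose parts are minimal (α,3+ε)-clusters, then 𝒫 = 𝒫'. In other words, X admits at most one partition into minimal (α,3+ε)-clusters. -/

import Mathlib

open Finset

/-- `Δ(x,A)` with the uniform measure: the average distance from `x` to points of `A`. -/
noncomputable def DptU {X : Type*} [MetricSpace X] (x : X) (A : Finset X) : ℝ :=
  (∑ y ∈ A, dist x y) / (A.card : ℝ)

/-- An `(α,γ)`-cluster for the uniform measure: a nonempty set `C` with `|C|/|X| ≥ α` and
`Δ(y,C) ≥ γ·Δ(x,C)` for all `x ∈ C` and `y ∉ C`. -/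
def IsACluster {X : Type*} [Fintype X] [MetricSpace X] (α γ : ℝ) (C : Finset X) : Prop :=
  C.Nonempty ∧ α ≤ (C.card : ℝ) / (Fintype.card X : ℝ) ∧
    ∀ x ∈ C, ∀ y : X, y ∉ C → γ * DptU x C ≤ DptU y C

/-- A minimal `(α,γ)`-cluster: an `(α,γ)`-cluster containing no `(α,γ)`-cluster other
than itself. -/
def IsMinCluster {X : Type*} [Fintype X] [MetricSpace X] (α γ : ℝ) (C : Finset X) : Prop :=
  IsACluster α γ C ∧ ∀ C' ⊆ C, IsACluster α γ C' → C' = C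

/-- A partition of `X` (as an unordered family of nonempty pairwise disjoint sets covering `X`). -/
def IsPartitionFam {X : Type*} [Fintype X] (Fam : Finset (Finset X)) : Prop :=
  (∀ C ∈ Fam, C.Nonempty) ∧
  (∀ C ∈ Fam, ∀ C' ∈ Fam, C ≠ C' → Disjoint C C') ∧
  (∀ x : X, ∃ C ∈ Fam, x ∈ C)

lemma DptU_nonneg {X : Type*} [MetricSpace X] (x : X) (A : Finset X) : 0 ≤ DptU x A :=
  div_nonneg (Finset.sum_nonneg fun y _ => dist_nonneg) (Nat.cast_nonneg _)

lemma DptU_le_dist_add {X : Type*} [MetricSpace X] (v z : X) (A : Finset X)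
    (hA : A.Nonempty) : DptU v A ≤ dist v z + DptU z A := by
  have hc : (0:ℝ) < A.card := by exact_mod_cast Finset.card_pos.2 hA
  unfold DptU
  rw [div_le_iff₀ hc] at *
  have h : ∑ y ∈ A, dist v y ≤ ∑ y ∈ A, (dist v z + dist z y) :=
    Finset.sum_le_sum fun y _ => dist_triangle v z y
  rw [Finset.sum_add_distrib, Finset.sum_const, nsmul_eq_mul] at h
  calc ∑ y ∈ A, dist v y ≤ A.card * dist v z + ∑ y ∈ A, dist z y := h
    _ = (dist v z + (∑ y ∈ A, dist z y) / A.card) * A.card := by field_simp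

lemma dist_le_DptU_add {X : Type*} [MetricSpace X] (x x' : X) (A : Finset X)
    (hA : A.Nonempty) : dist x x' ≤ DptU x A + DptU x' A := by
  have hc : (0:ℝ) < A.card := by exact_mod_cast Finset.card_pos.2 hA
  have h : A.card * dist x x' ≤ ∑ y ∈ A, dist x y + ∑ y ∈ A, dist x' y := by
    rw [← Finset.sum_add_distrib]
    calc (A.card : ℝ) * dist x x' = ∑ _y ∈ A, dist x x' := by
          rw [Finset.sum_const, nsmul_eq_mul]
      _ ≤ ∑ y ∈ A, (dist x y + dist x' y) := Finset.sum_le_sum fun y _ => by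
          rw [dist_comm x' y]; exact dist_triangle x y x'
  unfold DptU
  rw [← add_div, le_div_iff₀ hc]
  linarith [h]

lemma DptU_pos_or {X : Type*} [MetricSpace X] {z : X} {A : Finset X}
    (hz : z ∈ A) (h : DptU z A ≤ 0) : ∀ y ∈ A, y = z := by
  have hc : (0:ℝ) < A.card := by exact_mod_cast Finset.card_pos.2 ⟨z, hz⟩
  have hs : ∑ y ∈ A, dist z y ≤ 0 := by
    have := (div_le_iff₀ hc).1 h
    simpa using this
  intro y hy
  have h0 : dist z y = 0 := le_antisymm
    (le_trans (Finset.single_le_sum (f := fun y => dist z y) (fun y _ => dist_nonneg) hy) hs) dist_nonneg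
  exact (dist_eq_zero.1 h0).symm

lemma minCluster_eq_of_inter {X : Type*} [Fintype X] [MetricSpace X] [DecidableEq X]
    {α ε : ℝ} (hε : 0 < ε) {C C' : Finset X}
    (hC : IsMinCluster α (3 + ε) C) (hC' : IsMinCluster α (3 + ε) C')
    {z : X} (hzC : z ∈ C) (hzC' : z ∈ C') : C = C' := by
  by_cases hsub : C ⊆ C'
  · exact hC'.2 C hsub hC.1
  by_cases hsub' : C' ⊆ C
  · exact (hC.2 C' hsub' hC'.1).symm
  exfalso
  obtain ⟨u, huC, huC'⟩ := Finset.not_subset.1 hsub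
  obtain ⟨v, hvC', hvC⟩ := Finset.not_subset.1 hsub'
  have hCne : C.Nonempty := ⟨z, hzC⟩
  have hC'ne : C'.Nonempty := ⟨z, hzC'⟩
  set a := DptU z C with ha
  set b := DptU z C' with hb
  set p := DptU u C with hp
  set q := DptU v C' with hq
  have ha0 : 0 < a := by
    rcases lt_or_ge 0 a with h | h
    · exact h
    · exact absurd ((DptU_pos_or hzC h) u huC ▸ hzC') huC'
  have hb0 : 0 < b := by
    rcases lt_or_ge 0 b with h | h
    · exact h
    · exact absurd ((DptU_pos_or hzC' h) v hvC' ▸ hzC) hvC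
  have hp0 : 0 ≤ p := DptU_nonneg u C
  have hq0 : 0 ≤ q := DptU_nonneg v C'
  have h1 : (3 + ε) * p ≤ DptU v C := hC.1.2.2 u huC v hvC
  have h2 : (3 + ε) * a ≤ DptU v C := hC.1.2.2 z hzC v hvC
  have h3 : (3 + ε) * q ≤ DptU u C' := hC'.1.2.2 v hvC' u huC'
  have h4 : (3 + ε) * b ≤ DptU u C' := hC'.1.2.2 z hzC' u huC'
  have h5 : DptU v C ≤ dist v z + a := DptU_le_dist_add v z C hCne
  have h6 : DptU u C' ≤ dist u z + b := DptU_le_dist_add u z C' hC'ne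
  have h7 : dist v z ≤ q + b := dist_le_DptU_add v z C' hC'ne
  have h8 : dist u z ≤ p + a := dist_le_DptU_add u z C hCne
  nlinarith [mul_pos hε (add_pos ha0 hb0), sq_nonneg ε,
    mul_pos (mul_pos hε hε) (add_pos ha0 hb0)]

/-- `X` admits at most one partition into minimal `(α,3+ε)`-clusters. -/
theorem stmt_12 {X : Type*} [Fintype X] [MetricSpace X] [DecidableEq X]
    (α ε : ℝ) (hα : 0 < α) (hε : 0 < ε)
    (Fam Fam' : Finset (Finset X))
    (hFam : IsPartitionFam Fam) (hFam' : IsPartitionFam Fam')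
    (hmin : ∀ C ∈ Fam, IsMinCluster α (3 + ε) C)
    (hmin' : ∀ C ∈ Fam', IsMinCluster α (3 + ε) C) :
    Fam = Fam' := by
  apply Finset.Subset.antisymm
  · intro C hC
    obtain ⟨x, hx⟩ := hFam.1 C hC
    obtain ⟨C', hC', hx'⟩ := hFam'.2.2 x
    rwa [minCluster_eq_of_inter hε (hmin C hC) (hmin' C' hC') hx hx']
  · intro C' hC'
    obtain ⟨x, hx⟩ := hFam'.1 C' hC'
    obtain ⟨C, hC, hx'⟩ := hFam.2.2 x
    rwa [← minCluster_eq_of_inter hε (hmin C hC) (hmin' C' hC') hx' hx]
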